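/- arXiv:2603.21431 — 2 statements merged into one kernel-verified Lean document; each statement's English description precedes it below -/
import Mathlib

section
/- Let Γ be a group and n ≥ 1. Let d_0, …, d_{n-1} with d_m ∈ M_{k_{m+1}×k_m}(ℝΓ) satisfy d_{m+1} d_m = 0, and set d_m = 0 for all m ≥ n (the complex has length n, as for a group of geometric dimension ≤ n). Assume that for every degree 1 ≤ m ≤ n and every j ≥ 1: (left-exactness) every x ∈ M_{k_m×j}(ℝΓ) with d_{m-1}* x = 0 is of the form d_m* y, and (right-exactness) every x ∈ M_{j×k_m}(ℝΓ) with x d_{m-1} = 0 is of the form y d_m. Then for every integer i with 2i ≥ n + 1 we have ker D_{i-1} = SC_i; that is, every a ∈ M_{k_i}(ℝΓ) with d_{i-1}* a d_{i-1} = 0 can be written as a = d_i* x + y d_i for some x ∈ M_{k_{i+1}×k_i}(ℝΓ) and y ∈ M_{k_i×k_{i+1}}(ℝΓ). -/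
open scoped BigOperators
noncomputable section

universe u v w

/-- The star operation on the real group algebra, determined by `γ ↦ γ⁻¹`. -/
def rgStar {G : Type u} [Group G] (x : MonoidAlgebra ℝ G) : MonoidAlgebra ℝ G :=
  MonoidAlgebra.mapDomain (fun g : G => g⁻¹) x

/-- The adjoint of a matrix over the real group algebra:
transpose and apply `rgStar` entrywise. -/
def adjM {G : Type u} [Group G] {m n : Type*}
    (a : Matrix m n (MonoidAlgebra ℝ G)) : Matrix n m (MonoidAlgebra ℝ G) :=
  Matrix.of fun i j => rgStar (a j i)

/-- A square matrix over the real group algebra is a sum of hermitian squares. -/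
def IsSOS {G : Type u} [Group G] {p : Type*} [Fintype p]
    (x : Matrix p p (MonoidAlgebra ℝ G)) : Prop :=
  ∃ (m : ℕ) (a : Fin m → Matrix p p (MonoidAlgebra ℝ G)),
    x = ∑ i, adjM (a i) * a i

/-- A unitary representation of `G` on a real Hilbert space. -/
structure URep (G : Type u) [Group G] : Type (max u (v + 1)) where
  H : Type v
  [normed : NormedAddCommGroup H]
  [ips : InnerProductSpace ℝ H]
  [complete : CompleteSpace H]
  π : G →* (H →L[ℝ] H)
  isometric : ∀ (γ : G) (x : H), ‖π γ x‖ = ‖x‖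

attribute [instance] URep.normed URep.ips URep.complete

/-- The extension of a unitary representation to the real group algebra. -/
noncomputable def URep.alg {G : Type u} [Group G] (ρ : URep.{u, v} G) :
    MonoidAlgebra ℝ G →ₐ[ℝ] (ρ.H →L[ℝ] ρ.H) :=
  MonoidAlgebra.lift ℝ (ρ.H →L[ℝ] ρ.H) G ρ.π

/-- The entrywise application of a unitary representation to a matrix over the
real group algebra, acting on tuples of vectors. -/
noncomputable def URep.mat {G : Type u} [Group G] (ρ : URep.{u, v} G)
    {p q : Type*} [Fintype q] (a : Matrix p q (MonoidAlgebra ℝ G))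
    (z : q → ρ.H) : p → ρ.H :=
  fun i => ∑ j, ρ.alg (a i j) (z j)

/-- The inner product on a finite power of a real Hilbert space. -/
noncomputable def pInner {G : Type u} [Group G] (ρ : URep.{u, v} G)
    {p : Type*} [Fintype p] (x y : p → ρ.H) : ℝ :=
  ∑ i, inner ℝ (x i) (y i)

lemma rgStar_zero {G : Type u} [Group G] : rgStar (0 : MonoidAlgebra ℝ G) = 0 :=
  MonoidAlgebra.mapDomain_zero _

lemma rgStar_add {G : Type u} [Group G] (x y : MonoidAlgebra ℝ G) :
    rgStar (x + y) = rgStar x + rgStar y := MonoidAlgebra.mapDomain_add _ _ _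

lemma rgStar_mul {G : Type u} [Group G] (x y : MonoidAlgebra ℝ G) :
    rgStar (x * y) = rgStar y * rgStar x := by
  induction x using MonoidAlgebra.induction_linear with
  | zero => simp [rgStar_zero, rgStar]
  | add a b ha hb => rw [add_mul, rgStar_add, ha, hb, rgStar_add, mul_add]
  | single g r =>
    induction y using MonoidAlgebra.induction_linear with
    | zero => simp [rgStar_zero, rgStar]
    | add a b ha hb => rw [mul_add, rgStar_add, ha, hb, rgStar_add, add_mul]
    | single h s =>
      show rgStar (MonoidAlgebra.single g r * MonoidAlgebra.single h s) = _
      rw [MonoidAlgebra.single_mul_single]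
      unfold rgStar
      rw [MonoidAlgebra.mapDomain_single, MonoidAlgebra.mapDomain_single, MonoidAlgebra.mapDomain_single,
        MonoidAlgebra.single_mul_single]
      rw [mul_inv_rev, mul_comm r s]

lemma rgStar_sum {G : Type u} [Group G] {ι : Type*} (s : Finset ι)
    (f : ι → MonoidAlgebra ℝ G) :
    rgStar (∑ i ∈ s, f i) = ∑ i ∈ s, rgStar (f i) :=
  map_sum (AddMonoidHom.mk' rgStar rgStar_add) f s

lemma adjM_zero {G : Type u} [Group G] {m n : Type*} :
    adjM (0 : Matrix m n (MonoidAlgebra ℝ G)) = 0 := by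
  ext i j
  simp [adjM, rgStar_zero]

lemma adjM_mul {G : Type u} [Group G] {m n p : Type*} [Fintype n]
    (A : Matrix m n (MonoidAlgebra ℝ G)) (B : Matrix n p (MonoidAlgebra ℝ G)) :
    adjM (A * B) = adjM B * adjM A := by
  ext i j
  simp [adjM, Matrix.mul_apply, rgStar_sum, rgStar_mul]

/-- for an acyclic complex of length `n` (as for a group of type `F`
of geometric dimension `≤ n`, so that there are no cells — and the codifferentials
vanish — above degree `n`), in every degree `i` with `2i ≥ n + 1` we have
`ker D_{i-1} = SC_i`: every `a` with `d_{i-1}* a d_{i-1} = 0` can be written as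
`a = d_i* x + y d_i`.  (Here the degree `i` is written as `i0 + 1`.) -/
theorem stmt_6 {G : Type u} [Group G] (n : ℕ) (hn : 1 ≤ n) (k : ℕ → ℕ)
    (d : ∀ m : ℕ, Matrix (Fin (k (m + 1))) (Fin (k m)) (MonoidAlgebra ℝ G))
    (hdd : ∀ m : ℕ, d (m + 1) * d m = 0)
    (hktop : ∀ m : ℕ, n < m → k m = 0)
    (hdtop : ∀ m : ℕ, n ≤ m → d m = 0)
    (hexL : ∀ m : ℕ, m < n → ∀ j : ℕ, 1 ≤ j →
      ∀ x : Matrix (Fin (k (m + 1))) (Fin j) (MonoidAlgebra ℝ G),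
        adjM (d m) * x = 0 →
        ∃ y : Matrix (Fin (k (m + 2))) (Fin j) (MonoidAlgebra ℝ G),
          x = adjM (d (m + 1)) * y)
    (hexR : ∀ m : ℕ, m < n → ∀ j : ℕ, 1 ≤ j →
      ∀ x : Matrix (Fin j) (Fin (k (m + 1))) (MonoidAlgebra ℝ G),
        x * d m = 0 →
        ∃ y : Matrix (Fin j) (Fin (k (m + 2))) (MonoidAlgebra ℝ G),
          x = y * d (m + 1)) :
    ∀ i0 : ℕ, n + 1 ≤ 2 * (i0 + 1) →
      ∀ a : Matrix (Fin (k (i0 + 1))) (Fin (k (i0 + 1))) (MonoidAlgebra ℝ G),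
        adjM (d i0) * a * d i0 = 0 →
        ∃ (x : Matrix (Fin (k (i0 + 2))) (Fin (k (i0 + 1))) (MonoidAlgebra ℝ G))
          (y : Matrix (Fin (k (i0 + 1))) (Fin (k (i0 + 2))) (MonoidAlgebra ℝ G)),
          a = adjM (d (i0 + 1)) * x + y * d (i0 + 1) := by
    -- versions of exactness that also work for `j = 0`
  have hexL' : ∀ m : ℕ, m < n → ∀ j : ℕ,
      ∀ x : Matrix (Fin (k (m + 1))) (Fin j) (MonoidAlgebra ℝ G),
        adjM (d m) * x = 0 →
        ∃ y : Matrix (Fin (k (m + 2))) (Fin j) (MonoidAlgebra ℝ G),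
          x = adjM (d (m + 1)) * y := by
    intro m hm j x hx
    rcases Nat.eq_zero_or_pos j with hj | hj
    · subst hj
      exact ⟨0, by ext i jj; exact jj.elim0⟩
    · exact hexL m hm j hj x hx
  have hexR' : ∀ m : ℕ, m < n → ∀ j : ℕ,
      ∀ x : Matrix (Fin j) (Fin (k (m + 1))) (MonoidAlgebra ℝ G),
        x * d m = 0 →
        ∃ y : Matrix (Fin j) (Fin (k (m + 2))) (MonoidAlgebra ℝ G),
          x = y * d (m + 1) := by
    intro m hm j x hx
    rcases Nat.eq_zero_or_pos j with hj | hj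
    · subst hj
      exact ⟨0, by ext i jj; exact i.elim0⟩
    · exact hexR m hm j hj x hx
  -- the zig-zag induction
  have key : ∀ s p q : ℕ, p + s + 1 = n → q < n → n ≤ p + q + 1 →
      ∀ b : Matrix (Fin (k (p + 1))) (Fin (k (q + 1))) (MonoidAlgebra ℝ G),
        adjM (d p) * b * d q = 0 →
        ∃ (u : Matrix (Fin (k (p + 2))) (Fin (k (q + 1))) (MonoidAlgebra ℝ G))
          (v : Matrix (Fin (k (p + 1))) (Fin (k (q + 2))) (MonoidAlgebra ℝ G)),
          b = adjM (d (p + 1)) * u + v * d (q + 1) := by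
    intro s
    induction s with
    | zero =>
      intro p q hps hq hpq b hb
      have hp : p < n := by omega
      obtain ⟨c, hc⟩ := hexL' p hp _ (b * d q) (by rw [← Matrix.mul_assoc]; exact hb)
      have hdn : d (p + 1) = 0 := hdtop _ (by omega)
      rw [hdn, adjM_zero, Matrix.zero_mul] at hc
      obtain ⟨y, hy⟩ := hexR' q hq _ b hc
      exact ⟨0, y, by rw [Matrix.mul_zero, zero_add]; exact hy⟩
    | succ s ih =>
      intro p q hps hq hpq b hb
      have hp : p < n := by omega
      obtain ⟨q', rfl⟩ : ∃ q', q = q' + 1 := ⟨q - 1, by omega⟩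
      obtain ⟨c, hc⟩ := hexL' p hp _ (b * d (q' + 1)) (by rw [← Matrix.mul_assoc]; exact hb)
      have hc2 : adjM (d (p + 1)) * c * d q' = 0 := by
        calc adjM (d (p + 1)) * c * d q' = b * d (q' + 1) * d q' := by rw [← hc]
          _ = b * (d (q' + 1) * d q') := Matrix.mul_assoc _ _ _
          _ = 0 := by rw [hdd q', Matrix.mul_zero]
      obtain ⟨u, v, huv⟩ := ih (p + 1) q' (by omega) (by omega) (by omega) c hc2
      have hz : adjM (d (p + 1)) * adjM (d (p + 2)) = 0 := by
        rw [← adjM_mul, hdd (p + 1), adjM_zero]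
      have hbd : (b - adjM (d (p + 1)) * v) * d (q' + 1) = 0 := by
        rw [Matrix.sub_mul, hc, huv, Matrix.mul_add, ← Matrix.mul_assoc, ← Matrix.mul_assoc,
          hz, Matrix.zero_mul, zero_add, Matrix.mul_assoc, sub_self]
      obtain ⟨y, hy⟩ := hexR' (q' + 1) hq _ _ hbd
      exact ⟨v, y, by rw [← hy]; abel⟩
  intro i0 hi a ha
  by_cases hin : i0 + 1 ≤ n
  · exact key (n - (i0 + 1)) i0 i0 (by omega) (by omega) (by omega) a ha
  · have hk0 : k (i0 + 1) = 0 := hktop _ (by omega)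
    refine ⟨0, 0, ?_⟩
    ext i j
    exact absurd i.isLt (by omega)
end
end

section
/- Let Γ = ℤ² be the free abelian group on two generators s, t, with group algebra ℝ[ℤ²]. Let d_0 ∈ M_{2×1}(ℝΓ) be the column with entries 1 − s and 1 − t, and d_1 = (1 − t, s − 1) ∈ M_{1×2}(ℝΓ) (so that d_1 d_0 = 0). Define D_0 : M_2(ℝΓ) → ℝΓ by D_0(a) = d_0* a d_0 and D_1 : ℝΓ → M_2(ℝΓ) by D_1(ξ) = d_1* ξ d_1. Then ker D_0 ≠ im D_1; specifically, the diagonal matrix a = diag((1 − t⁻¹)(1 − t), (s⁻¹ − 1)(1 − s)) ∈ M_2(ℝΓ) satisfies D_0(a) = 0 but a ∉ im D_1. -/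
open scoped BigOperators
noncomputable section

universe u v w

lemma rgStar_single {G : Type u} [Group G] (g : G) (r : ℝ) :
    rgStar (MonoidAlgebra.single g r) = MonoidAlgebra.single g⁻¹ r :=
  MonoidAlgebra.mapDomain_single

lemma rgStar_one' {G : Type u} [Group G] : rgStar (1 : MonoidAlgebra ℝ G) = 1 := by
  simp [rgStar, MonoidAlgebra.one_def, MonoidAlgebra.mapDomain_single]

lemma rgStar_sub' {G : Type u} [Group G] (x y : MonoidAlgebra ℝ G) :
    rgStar (x - y) = rgStar x - rgStar y :=
  by rw [eq_sub_iff_add_eq, rgStar, rgStar, rgStar, ← MonoidAlgebra.mapDomain_add, sub_add_cancel]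

/-- The group `ℤ²`, written multiplicatively. -/
abbrev Z2 : Type := Multiplicative (ℤ × ℤ)

/-- The generator `s` of `ℤ²`. -/
def sGen : Z2 := Multiplicative.ofAdd (1, 0)

/-- The generator `t` of `ℤ²`. -/
def tGen : Z2 := Multiplicative.ofAdd (0, 1)

/-- The codifferential `d_0` for `ℤ²`: the column with entries `1 - s`, `1 - t`. -/
noncomputable def d0Z2 : Matrix (Fin 2) (Fin 1) (MonoidAlgebra ℝ Z2) :=
  Matrix.of ![![1 - MonoidAlgebra.of ℝ Z2 sGen], ![1 - MonoidAlgebra.of ℝ Z2 tGen]]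

/-- The codifferential `d_1` for `ℤ²`: the row `(1 - t, s - 1)`. -/
noncomputable def d1Z2 : Matrix (Fin 1) (Fin 2) (MonoidAlgebra ℝ Z2) :=
  Matrix.of ![![1 - MonoidAlgebra.of ℝ Z2 tGen, MonoidAlgebra.of ℝ Z2 sGen - 1]]

/-- The witness matrix `a = diag((1 - t⁻¹)(1 - t), (s⁻¹ - 1)(1 - s))`. -/
noncomputable def aZ2 : Matrix (Fin 2) (Fin 2) (MonoidAlgebra ℝ Z2) :=
  Matrix.diagonal
    ![(1 - MonoidAlgebra.of ℝ Z2 tGen⁻¹) * (1 - MonoidAlgebra.of ℝ Z2 tGen),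
      (MonoidAlgebra.of ℝ Z2 sGen⁻¹ - 1) * (1 - MonoidAlgebra.of ℝ Z2 sGen)]

lemma one_sub_single_ne {g : Z2} (hg : g ≠ 1) :
    (1 : MonoidAlgebra ℝ Z2) - MonoidAlgebra.single g (1 : ℝ) ≠ 0 := by
  intro h
  rw [sub_eq_zero, MonoidAlgebra.one_def] at h
  exact hg ((MonoidAlgebra.single_left_inj one_ne_zero).mp h).symm

lemma single_sub_one_ne {g : Z2} (hg : g ≠ 1) :
    (MonoidAlgebra.single g (1 : ℝ) : MonoidAlgebra ℝ Z2) - 1 ≠ 0 := by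
  intro h
  apply one_sub_single_ne hg
  rw [← neg_sub] at h
  exact neg_eq_zero.mp h

lemma sGen_ne_one : sGen ≠ 1 := by decide
lemma tGen_ne_one : tGen ≠ 1 := by decide
lemma tGen_inv_ne_one : tGen⁻¹ ≠ 1 := by decide

lemma part1 : d1Z2 * d0Z2 = 0 := by
  refine Matrix.ext fun i j => ?_
  fin_cases i; fin_cases j
  simp [d1Z2, d0Z2, Matrix.mul_apply, Fin.sum_univ_two]
  ring

lemma part2 : adjM d0Z2 * aZ2 * d0Z2 = 0 := by
  refine Matrix.ext fun i j => ?_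
  fin_cases i; fin_cases j
  simp [d0Z2, aZ2, adjM, Matrix.mul_apply, Fin.sum_univ_two, Matrix.diagonal,
    rgStar_sub', rgStar_one', rgStar_single]
  ring

lemma part3 : ¬ ∃ ξ : MonoidAlgebra ℝ Z2,
    aZ2 = adjM d1Z2 * Matrix.diagonal (fun _ : Fin 1 => ξ) * d1Z2 := by
  rintro ⟨ξ, h⟩
  have h01 := congrFun (congrFun h 0) 1
  have h00 := congrFun (congrFun h 0) 0
  simp [aZ2, adjM, d1Z2, Matrix.mul_apply, Fin.sum_univ_one, Matrix.diagonal,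
    rgStar_sub', rgStar_one', rgStar_single] at h01 h00
  have hT := one_sub_single_ne tGen_ne_one
  have hTi := one_sub_single_ne tGen_inv_ne_one
  have hS := single_sub_one_ne sGen_ne_one
  -- from the off-diagonal entry, ξ = 0
  have hξ : ξ = 0 := by tauto
  rw [hξ] at h00
  simp at h00
  tauto

/-- for `Γ = ℤ²` with the codifferentials `d_0`, `d_1` above
(`d_1 d_0 = 0`), we have `ker D_0 ≠ im D_1`; specifically the diagonal matrix
`a = diag((1-t⁻¹)(1-t), (s⁻¹-1)(1-s))` satisfies `D_0(a) = d_0* a d_0 = 0` but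

`a ∉ im D_1 = {d_1* ξ d_1 : ξ ∈ ℝΓ}`. -/
theorem stmt_19 :
    d1Z2 * d0Z2 = 0 ∧
    adjM d0Z2 * aZ2 * d0Z2 = 0 ∧
    (¬ ∃ ξ : MonoidAlgebra ℝ Z2,
      aZ2 = adjM d1Z2 * Matrix.diagonal (fun _ : Fin 1 => ξ) * d1Z2) ∧
    {x : Matrix (Fin 2) (Fin 2) (MonoidAlgebra ℝ Z2) | adjM d0Z2 * x * d0Z2 = 0} ≠
      {x : Matrix (Fin 2) (Fin 2) (MonoidAlgebra ℝ Z2) |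
        ∃ ξ : MonoidAlgebra ℝ Z2,
          x = adjM d1Z2 * Matrix.diagonal (fun _ : Fin 1 => ξ) * d1Z2} := by
  refine ⟨part1, part2, part3, ?_⟩
  intro hset
  have hmem : aZ2 ∈ {x : Matrix (Fin 2) (Fin 2) (MonoidAlgebra ℝ Z2) |
      adjM d0Z2 * x * d0Z2 = 0} := part2
  rw [hset] at hmem
  exact part3 hmem
end
end
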